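/- Let (X,Y) be random variables with laws P_X, P_Y and joint law P_{XY}, and (X',Y') an independent copy of (X,Y), and Y'' an independent copy of Y. Assume k and l are bounded measurable kernels on X and Y. Then ‖μ_{P_{XY}} − μ_{P_X P_Y}‖²_H = E[k(X,X') l(Y,Y')] + E[k(X,X')]·E[l(Y,Y')] − 2 E[k(X,X') l(Y,Y'')], where H is the RKHS with product kernel K((x,y),(x',y')) = k(x,x') l(y,y'), μ_P denotes the mean embedding of P in H, and on the right-hand side (X,Y) ⟂ (X',Y') ⟂ Y''. -/

import Mathlib

open MeasureTheory
open scoped RealInnerProductSpace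

/-- Population HSIC expansion: with bounded kernels `k`, `l` and the product-kernel RKHS `H`
represented by a feature map `φ` (so `⟪φ(x,y), φ(x',y')⟫ = k(x,x')·l(y,y')`), the squared
distance between the mean embedding of the joint law `μ_{P_{XY}} = ∫ φ(X,Y) dμ` and the mean
embedding of the product of the marginals `μ_{P_X P_Y} = ∫∫ φ(X ω, Y ω') dμ dμ` equals
`E[k(X,X')l(Y,Y')] + E[k(X,X')]·E[l(Y,Y')] − 2E[k(X,X')l(Y,Y'')]`, where the independent copies
are encoded by iterated integrals over independent coordinates. -/
theorem hsic_population_expansion {Ω 𝒳 𝒴 H : Type*}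
    [MeasurableSpace Ω] [MeasurableSpace 𝒳] [MeasurableSpace 𝒴]
    [NormedAddCommGroup H] [InnerProductSpace ℝ H] [CompleteSpace H]
    (μ : Measure Ω) [IsProbabilityMeasure μ]
    (X : Ω → 𝒳) (Y : Ω → 𝒴) (hX : Measurable X) (hY : Measurable Y)
    (k : 𝒳 → 𝒳 → ℝ) (l : 𝒴 → 𝒴 → ℝ)
    (hkB : ∃ Ck : ℝ, ∀ a b, |k a b| ≤ Ck)
    (hlB : ∃ Cl : ℝ, ∀ a b, |l a b| ≤ Cl)
    (hkm : Measurable (Function.uncurry k)) (hlm : Measurable (Function.uncurry l))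
    (φ : 𝒳 × 𝒴 → H)
    (hφ : ∀ p q : 𝒳 × 𝒴, ⟪φ p, φ q⟫ = k p.1 q.1 * l p.2 q.2)
    (hint : Integrable (fun ω => φ (X ω, Y ω)) μ)
    (hint2 : Integrable (fun ω => ∫ ω', φ (X ω, Y ω') ∂μ) μ)
    (hint3 : ∀ ω, Integrable (fun ω' => φ (X ω, Y ω')) μ) :
    ‖(∫ ω, φ (X ω, Y ω) ∂μ) - ∫ ω, ∫ ω', φ (X ω, Y ω') ∂μ ∂μ‖ ^ 2 =
      (∫ ω, ∫ ω', k (X ω) (X ω') * l (Y ω) (Y ω') ∂μ ∂μ)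
        + (∫ ω, ∫ ω', k (X ω) (X ω') ∂μ ∂μ) * (∫ ω, ∫ ω', l (Y ω) (Y ω') ∂μ ∂μ)
        - 2 * ∫ ω, ∫ ω', ∫ ω'', k (X ω) (X ω') * l (Y ω) (Y ω'') ∂μ ∂μ ∂μ := by
  set A := ∫ ω, φ (X ω, Y ω) ∂μ with hA
  set B := ∫ ω, ∫ ω', φ (X ω, Y ω') ∂μ ∂μ with hB
  have hAA : ⟪A, A⟫ = ∫ ω, ∫ ω', k (X ω) (X ω') * l (Y ω) (Y ω') ∂μ ∂μ := by
    rw [hA, ← integral_inner hint]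
    congr 1; funext ω
    rw [real_inner_comm, ← integral_inner hint]
    congr 1; funext ω'
    exact hφ _ _
  have hAB : ⟪A, B⟫ = ∫ ω, ∫ ω', ∫ ω'', k (X ω) (X ω') * l (Y ω) (Y ω'') ∂μ ∂μ ∂μ := by
    rw [hA, hB, real_inner_comm, ← integral_inner hint]
    congr 1; funext ω
    rw [real_inner_comm, ← integral_inner hint2]
    congr 1; funext ω'
    rw [← integral_inner (hint3 ω')]
    congr 1; funext ω''
    exact hφ _ _
  have hBB : ⟪B, B⟫ =
      (∫ ω, ∫ ω', k (X ω) (X ω') ∂μ ∂μ) * (∫ ω, ∫ ω', l (Y ω) (Y ω') ∂μ ∂μ) := by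
    have key : ∀ ω ω₂ : Ω,
        ⟪∫ ω', φ (X ω, Y ω') ∂μ, ∫ ω'', φ (X ω₂, Y ω'') ∂μ⟫
          = k (X ω) (X ω₂) * ∫ ω', ∫ ω'', l (Y ω') (Y ω'') ∂μ ∂μ := by
      intro ω ω₂
      rw [real_inner_comm, ← integral_inner (hint3 ω)]
      have h1 : ∀ ω' : Ω,
          (inner ℝ (∫ ω'', φ (X ω₂, Y ω'') ∂μ) (φ (X ω, Y ω')) : ℝ)
            = k (X ω) (X ω₂) * ∫ ω'', l (Y ω') (Y ω'') ∂μ := by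
        intro ω'
        rw [real_inner_comm, ← integral_inner (hint3 ω₂)]
        simp only [hφ]
        exact integral_const_mul _ _
      simp only [h1]
      exact integral_const_mul _ _
    rw [hB, real_inner_comm, ← integral_inner hint2]
    have h2 : ∀ ω : Ω,
        (inner ℝ (∫ ω₂, ∫ ω'', φ (X ω₂, Y ω'') ∂μ ∂μ) (∫ ω', φ (X ω, Y ω') ∂μ) : ℝ)
          = (∫ ω₂, k (X ω) (X ω₂) ∂μ) * ∫ ω', ∫ ω'', l (Y ω') (Y ω'') ∂μ ∂μ := by
      intro ω
      rw [real_inner_comm, ← integral_inner hint2]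
      simp only [key]
      exact integral_mul_const _ _
    simp only [h2]
    rw [integral_mul_const]
  have hBA : ⟪B, A⟫ = ∫ ω, ∫ ω', ∫ ω'', k (X ω) (X ω') * l (Y ω) (Y ω'') ∂μ ∂μ ∂μ := by
    rw [real_inner_comm]; exact hAB
  rw [← real_inner_self_eq_norm_sq, inner_sub_sub_self, hAA, hAB, hBB, hBA]
  ring
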